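/- Let G and H be nonzero formal power series in ℝ[[ρ,θ]] such that every common vertex of their Newton polygons satisfies the non-vanishing condition a_{i,j}(G) + a_{i,j}(H) ≠ 0 (i.e. Λ^V(G\H) ∩ Λ^V(H\G) = ∅). Then the lower convex semi-hull of the support of G+H equals the lower convex semi-hull of Δ^V(G) ∪ Δ^V(H), where Δ^V denotes the vertex set of the respective Newton polygon. -/

import Mathlib

open scoped Pointwise

/-- The coefficient of `ρ^i θ^j` in a formal power series in two variables over `ℝ`. -/
noncomputable def coef (F : MvPowerSeries (Fin 2) ℝ) (p : ℕ × ℕ) : ℝ :=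
  MvPowerSeries.coeff (Finsupp.single (0 : Fin 2) p.1 + Finsupp.single (1 : Fin 2) p.2) F

/-- The support (valid index set) `Δ(F)` of a power series. -/
noncomputable def suppSet (F : MvPowerSeries (Fin 2) ℝ) : Set (ℕ × ℕ) :=
  {p | coef F p ≠ 0}

/-- Embedding of lattice indices into `ℝ²`. -/
noncomputable def embed (p : ℕ × ℕ) : ℝ × ℝ := ((p.1 : ℝ), (p.2 : ℝ))

/-- The lower convex semi-hull `℘(S) = conv(S + ℝ≥0²)` of a set of lattice points. -/
noncomputable def lsh (S : Set (ℕ × ℕ)) : Set (ℝ × ℝ) :=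
  convexHull ℝ (embed '' S + {q : ℝ × ℝ | 0 ≤ q.1 ∧ 0 ≤ q.2})

/-- The vertex set `Δ^V(F)` of the Newton polygon: the lattice points whose image
is an extreme point of the lower convex semi-hull of the support. -/
noncomputable def vertexSet (F : MvPowerSeries (Fin 2) ℝ) : Set (ℕ × ℕ) :=
  {p | embed p ∈ (lsh (suppSet F)).extremePoints ℝ}

/-- The set `Λ^V(G\H)` of vanishing common vertices. -/
noncomputable def lamV (G H : MvPowerSeries (Fin 2) ℝ) : Set (ℕ × ℕ) :=
  {p | p ∈ vertexSet G ∧ p ∈ suppSet H ∧ coef G p + coef H p = 0}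


open Set

def Qs : Set (ℝ × ℝ) := {q : ℝ × ℝ | 0 ≤ q.1 ∧ 0 ≤ q.2}

lemma Qs_eq_Ici : Qs = Set.Ici ((0, 0) : ℝ × ℝ) := by
  ext q; simp [Qs, Prod.le_def]

lemma Qs_convex : Convex ℝ Qs := by rw [Qs_eq_Ici]; exact convex_Ici _

lemma Qs_closed : IsClosed Qs := by rw [Qs_eq_Ici]; exact isClosed_Ici

lemma zero_mem_Qs : (0 : ℝ × ℝ) ∈ Qs := ⟨le_refl _, le_refl _⟩

lemma Qs_add_mem {q r : ℝ × ℝ} (hq : q ∈ Qs) (hr : r ∈ Qs) : q + r ∈ Qs :=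
  ⟨add_nonneg hq.1 hr.1, add_nonneg hq.2 hr.2⟩

lemma Qs_smul_mem {t : ℝ} (ht : 0 ≤ t) {q : ℝ × ℝ} (hq : q ∈ Qs) : t • q ∈ Qs :=
  ⟨mul_nonneg ht hq.1, mul_nonneg ht hq.2⟩

lemma lsh_def (S : Set (ℕ × ℕ)) : lsh S = convexHull ℝ (embed '' S + Qs) := rfl

lemma lsh_eq (S : Set (ℕ × ℕ)) : lsh S = convexHull ℝ (embed '' S) + Qs := by
  rw [lsh_def, convexHull_add, Qs_convex.convexHull_eq]

lemma lsh_convex (S : Set (ℕ × ℕ)) : Convex ℝ (lsh S) := convex_convexHull ℝ _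

lemma lsh_mono {S T : Set (ℕ × ℕ)} (h : S ⊆ T) : lsh S ⊆ lsh T :=
  convexHull_mono (Set.add_subset_add (Set.image_mono h) Set.Subset.rfl)

lemma embed_injective : Function.Injective embed := by
  intro p q h
  have h1 : (p.1 : ℝ) = q.1 := congrArg Prod.fst h
  have h2 : (p.2 : ℝ) = q.2 := congrArg Prod.snd h
  exact Prod.ext (Nat.cast_injective h1) (Nat.cast_injective h2)

lemma add_mem_lsh {S : Set (ℕ × ℕ)} {a q : ℝ × ℝ} (ha : a ∈ embed '' S) (hq : q ∈ Qs) :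
    a + q ∈ lsh S := subset_convexHull ℝ _ (Set.add_mem_add ha hq)

lemma mem_lsh {S : Set (ℕ × ℕ)} {p : ℕ × ℕ} (hp : p ∈ S) : embed p ∈ lsh S := by
  simpa using add_mem_lsh ⟨p, hp, rfl⟩ zero_mem_Qs

lemma lsh_add_Qs_mem {S : Set (ℕ × ℕ)} {x q : ℝ × ℝ} (hx : x ∈ lsh S) (hq : q ∈ Qs) :
    x + q ∈ lsh S := by
  rw [lsh_eq] at hx ⊢
  obtain ⟨y, hy, r, hr, rfl⟩ := hx
  exact ⟨y, hy, r + q, Qs_add_mem hr hq, by exact (add_assoc y r q).symm⟩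

lemma extreme_no_slack {S : Set (ℕ × ℕ)} {a d : ℝ × ℝ} (ha : a ∈ embed '' S) (hd : d ∈ Qs)
    (hx : a + d ∈ (lsh S).extremePoints ℝ) : d = 0 := by
  by_contra hne
  have h1 : a ∈ lsh S := by simpa using add_mem_lsh ha zero_mem_Qs
  have h2 : a + (d + d) ∈ lsh S := add_mem_lsh ha (Qs_add_mem hd hd)
  have hseg : a + d ∈ openSegment ℝ a (a + (d + d)) :=
    ⟨1 / 2, 1 / 2, by norm_num, by norm_num, by norm_num, by module⟩
  have := hx.2 h1 h2 hseg
  exact hne (by simpa using this.symm)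

lemma ext_lsh_subset {S : Set (ℕ × ℕ)} : (lsh S).extremePoints ℝ ⊆ embed '' S := by
  intro x hx
  have hx' : x ∈ embed '' S + Qs := extremePoints_convexHull_subset hx
  obtain ⟨a, ha, q, hq, rfl⟩ := hx'
  have : q = 0 := extreme_no_slack ha hq hx
  simpa [this] using ha

lemma embed_decomp {q p : ℕ × ℕ} (h : q ≤ p) :
    ∃ d ∈ Qs, embed p = embed q + d := by
  refine ⟨((p.1 : ℝ) - q.1, (p.2 : ℝ) - q.2),
    ⟨sub_nonneg.2 (by exact_mod_cast h.1), sub_nonneg.2 (by exact_mod_cast h.2)⟩, ?_⟩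
  simp only [embed, Prod.mk_add_mk, Prod.ext_iff]
  constructor <;> ring

lemma vertex_minimal {S : Set (ℕ × ℕ)} {p q : ℕ × ℕ}
    (hx : embed p ∈ (lsh S).extremePoints ℝ) (hq : q ∈ S) (hle : q ≤ p) : q = p := by
  obtain ⟨d, hd, hdec⟩ := embed_decomp hle
  have : d = 0 := extreme_no_slack ⟨q, hq, rfl⟩ hd (by rwa [← hdec])
  apply embed_injective
  rw [hdec, this, add_zero]

def minSet (S : Set (ℕ × ℕ)) : Set (ℕ × ℕ) := {p ∈ S | ∀ q ∈ S, q ≤ p → q = p}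

lemma minSet_subset (S : Set (ℕ × ℕ)) : minSet S ⊆ S := fun _ h => h.1

lemma isPWO_nat_prod (s : Set (ℕ × ℕ)) : s.IsPWO := by
  have h : (Set.univ : Set ℕ).IsWF := Set.isWF_univ_iff.2 inferInstance
  have := (h.isPWO.prod h.isPWO)
  exact this.mono (fun x _ => ⟨trivial, trivial⟩)

lemma minSet_finite (S : Set (ℕ × ℕ)) : (minSet S).Finite := by
  have hanti : IsAntichain (· ≤ ·) (minSet S) :=
    fun a ha b hb hne hab => hne (hb.2 a ha.1 hab)
  exact hanti.finite_of_partiallyWellOrderedOn (isPWO_nat_prod _)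

lemma exists_min {S : Set (ℕ × ℕ)} {p : ℕ × ℕ} (hp : p ∈ S) :
    ∃ m ∈ minSet S, m ≤ p := by
  have hwf : WellFounded ((· < ·) : ℕ × ℕ → ℕ × ℕ → Prop) := wellFounded_lt
  obtain ⟨m, hm, hmin⟩ := hwf.has_min {q ∈ S | q ≤ p} ⟨p, hp, le_refl _⟩
  refine ⟨m, ⟨hm.1, fun q hq hle => ?_⟩, hm.2⟩
  by_contra hne
  exact hmin q ⟨hq, hle.trans hm.2⟩ (lt_of_le_of_ne hle hne)

lemma lsh_eq_minSet (S : Set (ℕ × ℕ)) : lsh S = lsh (minSet S) := by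
  refine Set.Subset.antisymm ?_ (lsh_mono (minSet_subset S))
  rw [lsh_def]
  refine convexHull_min ?_ (lsh_convex _)
  rintro x ⟨a, ⟨p, hp, rfl⟩, q, hq, rfl⟩
  obtain ⟨m, hm, hmle⟩ := exists_min hp
  obtain ⟨d, hd, hdec⟩ := embed_decomp hmle
  rw [hdec]
  show embed m + d + q ∈ lsh (minSet S)
  rw [add_assoc]
  exact add_mem_lsh ⟨m, hm, rfl⟩ (Qs_add_mem hd hq)

lemma lsh_closed (S : Set (ℕ × ℕ)) : IsClosed (lsh S) := by
  rw [lsh_eq_minSet, lsh_eq]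
  exact Qs_closed.add_left_of_isCompact
    (((minSet_finite S).image embed).isCompact_convexHull (𝕜 := ℝ))

/-- the linear functional `(x, y) ↦ α x + β y`. -/
noncomputable def fab (α β : ℝ) : (ℝ × ℝ) →L[ℝ] ℝ :=
  α • ContinuousLinearMap.fst ℝ ℝ ℝ + β • ContinuousLinearMap.snd ℝ ℝ ℝ

lemma fab_apply (α β : ℝ) (x : ℝ × ℝ) : fab α β x = α * x.1 + β * x.2 := by
  simp [fab, smul_eq_mul]

lemma fab_nonneg {α β : ℝ} (hα : 0 ≤ α) (hβ : 0 ≤ β) {q : ℝ × ℝ} (hq : q ∈ Qs) :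
    0 ≤ fab α β q := by
  rw [fab_apply]
  exact add_nonneg (mul_nonneg hα hq.1) (mul_nonneg hβ hq.2)

lemma fab_lower_bound {S : Set (ℕ × ℕ)} {α β c : ℝ} (hα : 0 ≤ α) (hβ : 0 ≤ β)
    (hc : ∀ p ∈ minSet S, c ≤ fab α β (embed p)) :
    ∀ x ∈ lsh S, c ≤ fab α β x := by
  intro x hx
  rw [lsh_eq_minSet, lsh_eq] at hx
  obtain ⟨y, hy, q, hq, rfl⟩ := hx
  have hy' : y ∈ {z : ℝ × ℝ | c ≤ fab α β z} := by
    refine convexHull_min ?_ ?_ hy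
    · rintro _ ⟨p, hp, rfl⟩; exact hc p hp
    · exact (convex_Ici c).linear_preimage ((fab α β) : (ℝ × ℝ) →ₗ[ℝ] ℝ)
  calc c ≤ fab α β y := hy'
    _ ≤ fab α β y + fab α β q := le_add_of_nonneg_right (fab_nonneg hα hβ hq)
    _ = fab α β (y + q) := (map_add _ _ _).symm

lemma exists_vertex_min {S : Set (ℕ × ℕ)} (hS : S.Nonempty) {α β : ℝ}
    (hα : 0 < α) (hβ : 0 < β) :
    ∃ v : ℕ × ℕ, embed v ∈ (lsh S).extremePoints ℝ ∧
      ∀ x ∈ lsh S, fab α β (embed v) ≤ fab α β x := by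
  obtain ⟨p₀, hp₀⟩ := hS
  obtain ⟨m₀, hm₀, _⟩ := exists_min hp₀
  -- minimizer over the finite set of minimal points
  obtain ⟨a, ha, hamin⟩ := Set.exists_min_image (minSet S) (fun p => fab α β (embed p))
    (minSet_finite S) ⟨m₀, hm₀⟩
  set f := fab α β with hf
  set c := f (embed a) with hc
  have hlb : ∀ x ∈ lsh S, c ≤ f x := fab_lower_bound hα.le hβ.le hamin
  -- the exposed face of minimizers
  set F := (-f).toExposed (lsh S) with hF
  have hexp : IsExposed ℝ (lsh S) F := ContinuousLinearMap.toExposed.isExposed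
  have haS : embed a ∈ lsh S := mem_lsh (minSet_subset S ha)
  have haF : embed a ∈ F := by
    refine ⟨haS, fun y hy => ?_⟩
    simp only [ContinuousLinearMap.neg_apply, neg_le_neg_iff]
    exact hlb y hy
  have hFsub : F ⊆ Set.Icc ((0, 0) : ℝ × ℝ) (c / α, c / β) := by
    rintro x ⟨hxP, hxmin⟩
    have hxQ : x ∈ Qs := by
      rw [lsh_eq] at hxP
      obtain ⟨y, hy, q, hq, rfl⟩ := hxP
      have : y ∈ Qs := by
        refine convexHull_min ?_ Qs_convex hy
        rintro _ ⟨p, _, rfl⟩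
        exact ⟨Nat.cast_nonneg _, Nat.cast_nonneg _⟩
      exact Qs_add_mem this hq
    have hfx : f x ≤ c := by
      have := hxmin (embed a) haS
      simpa only [ContinuousLinearMap.neg_apply, neg_le_neg_iff] using this
    rw [fab_apply] at hfx
    constructor
    · exact ⟨hxQ.1, hxQ.2⟩
    · constructor
      · rw [le_div_iff₀ hα]
        nlinarith [mul_nonneg hβ.le hxQ.2]
      · rw [le_div_iff₀ hβ]
        nlinarith [mul_nonneg hα.le hxQ.1]
  have hFcomp : IsCompact F :=
    isCompact_Icc.of_isClosed_subset (hexp.isClosed (lsh_closed S)) hFsub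
  obtain ⟨e, he⟩ := hFcomp.extremePoints_nonempty ⟨_, haF⟩
  have heP : e ∈ (lsh S).extremePoints ℝ :=
    hexp.isExtreme.extremePoints_subset_extremePoints he
  obtain ⟨v, hv, rfl⟩ := ext_lsh_subset heP
  refine ⟨v, heP, fun x hx => ?_⟩
  have := he.1.2 x hx
  simpa only [ContinuousLinearMap.neg_apply, neg_le_neg_iff] using this

lemma g_eval (g : (ℝ × ℝ) →L[ℝ] ℝ) (x : ℝ × ℝ) :
    g x = x.1 * g (1, 0) + x.2 * g (0, 1) := by
  have hx : x = x.1 • ((1 : ℝ), (0 : ℝ)) + x.2 • ((0 : ℝ), (1 : ℝ)) := by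
    ext <;> simp
  calc g x = g (x.1 • ((1 : ℝ), (0 : ℝ)) + x.2 • ((0 : ℝ), (1 : ℝ))) := by rw [← hx]
    _ = x.1 * g (1, 0) + x.2 * g (0, 1) := by
        rw [map_add, map_smul, map_smul, smul_eq_mul, smul_eq_mul]

lemma lsh_eq_lsh_vertex {S : Set (ℕ × ℕ)} (hS : S.Nonempty) :
    lsh S = lsh {p | embed p ∈ (lsh S).extremePoints ℝ} := by
  set V := {p | embed p ∈ (lsh S).extremePoints ℝ} with hVdef
  have hVS : V ⊆ S := by
    intro p hp
    obtain ⟨q, hq, he⟩ := ext_lsh_subset hp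
    rwa [← embed_injective he]
  refine Set.Subset.antisymm ?_ (lsh_mono hVS)
  -- key claim
  have key : ∀ p ∈ S, embed p ∈ lsh V := by
    intro p hp
    by_contra h
    obtain ⟨g, u, hgu, hub⟩ :=
      geometric_hahn_banach_point_closed (lsh_convex V) (lsh_closed V) h
    obtain ⟨v₀, hv₀, _⟩ := exists_vertex_min hS one_pos one_pos
    have hv₀V : v₀ ∈ V := hv₀
    have hv₀C : embed v₀ ∈ lsh V := mem_lsh hv₀V
    -- g is nonnegative on the quadrant
    have hgQ : ∀ q ∈ Qs, 0 ≤ g q := by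
      intro q hq
      by_contra hneg
      push_neg at hneg
      set t := (g (embed v₀) - u + 1) / (-g q) with ht
      have hgv : u < g (embed v₀) := hub _ hv₀C
      have ht0 : 0 ≤ t := by
        apply div_nonneg <;> linarith
      have hmem : embed v₀ + t • q ∈ lsh V :=
        lsh_add_Qs_mem hv₀C (Qs_smul_mem ht0 hq)
      have heval : g (embed v₀ + t • q) = g (embed v₀) + t * g q := by
        rw [map_add, map_smul, smul_eq_mul]
      have htq : t * g q = -(g (embed v₀) - u + 1) := by
        rw [ht]
        have hne : -g q ≠ 0 := by linarith
        rw [div_mul_eq_mul_div, div_eq_iff hne]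
        ring
      have := hub _ hmem
      rw [heval, htq] at this
      linarith
    set α0 := g (1, 0) with hα0
    set β0 := g (0, 1) with hβ0
    have hα0n : 0 ≤ α0 := hgQ _ ⟨zero_le_one, le_refl _⟩
    have hβ0n : 0 ≤ β0 := hgQ _ ⟨le_refl _, zero_le_one⟩
    set c := (embed p).1 + (embed p).2 with hcdef
    have hc0 : 0 ≤ c := by
      simp only [hcdef, embed]
      positivity
    set ε := (u - g (embed p)) / (c + 1) with hε
    have hε0 : 0 < ε := by
      apply div_pos <;> linarith
    obtain ⟨v, hvext, hvmin⟩ := exists_vertex_min hS (by linarith : (0:ℝ) < α0 + ε)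
      (by linarith : (0:ℝ) < β0 + ε)
    have hvC : embed v ∈ lsh V := mem_lsh hvext
    have hvu : u < g (embed v) := hub _ hvC
    have hcmp := hvmin (embed p) (mem_lsh hp)
    rw [fab_apply, fab_apply] at hcmp
    have hgv' : g (embed v) = (embed v).1 * α0 + (embed v).2 * β0 := g_eval g _
    have hgp' : g (embed p) = (embed p).1 * α0 + (embed p).2 * β0 := g_eval g _
    have hv1 : 0 ≤ (embed v).1 := Nat.cast_nonneg _
    have hv2 : 0 ≤ (embed v).2 := Nat.cast_nonneg _
    have hεc : ε * c < u - g (embed p) := by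
      rw [hε, div_mul_eq_mul_div, div_lt_iff₀ (by linarith : (0:ℝ) < c + 1)]
      nlinarith
    -- from hcmp : (α0+ε)*v1 + (β0+ε)*v2 ≤ (α0+ε)*p1 + (β0+ε)*p2
    nlinarith [mul_comm α0 (embed v).1]
  -- finish
  rw [lsh_def]
  refine convexHull_min ?_ (lsh_convex _)
  rintro x ⟨a, ⟨p, hp, rfl⟩, q, hq, rfl⟩
  exact lsh_add_Qs_mem (key p hp) hq

lemma fin2_decomp (d : Fin 2 →₀ ℕ) :
    d = Finsupp.single 0 (d 0) + Finsupp.single 1 (d 1) := by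
  ext i
  fin_cases i <;> simp [Finsupp.single_apply]

lemma coef_add (G H : MvPowerSeries (Fin 2) ℝ) (p : ℕ × ℕ) :
    coef (G + H) p = coef G p + coef H p := by
  simp [coef, map_add]

lemma supp_nonempty {G : MvPowerSeries (Fin 2) ℝ} (hG : G ≠ 0) : (suppSet G).Nonempty := by
  by_contra h
  rw [Set.not_nonempty_iff_eq_empty] at h
  apply hG
  ext d
  have : (d 0, d 1) ∉ suppSet G := by rw [h]; exact Set.notMem_empty _
  simp only [suppSet, Set.mem_setOf_eq, not_not] at this
  rw [coef] at this
  simpa [← fin2_decomp d] using this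

lemma vertexSet_subset (F : MvPowerSeries (Fin 2) ℝ) : vertexSet F ⊆ suppSet F := by
  intro p hp
  obtain ⟨q, hq, he⟩ := ext_lsh_subset hp
  rwa [← embed_injective he]

/-- under the non-vanishing condition for common vertices,
`℘(Δ(G+H)) = ℘(Δ^V(G) ∪ Δ^V(H))`. -/
theorem lsh_support_add (G H : MvPowerSeries (Fin 2) ℝ) (hG : G ≠ 0) (hH : H ≠ 0)
    (hnv : lamV G H ∩ lamV H G = ∅) :
    lsh (suppSet (G + H)) = lsh (vertexSet G ∪ vertexSet H) := by
  set U := suppSet G ∪ suppSet H with hUdef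
  have hU : U.Nonempty := (supp_nonempty hG).mono Set.subset_union_left
  set VU := {p : ℕ × ℕ | embed p ∈ (lsh U).extremePoints ℝ} with hVUdef
  have hUV : lsh U = lsh VU := lsh_eq_lsh_vertex hU
  have hVU_U : VU ⊆ U := by
    intro p hp
    obtain ⟨q, hq, he⟩ := ext_lsh_subset hp
    rwa [← embed_injective he]
  have hvertG : ∀ p ∈ VU, p ∈ suppSet G → p ∈ vertexSet G := by
    intro p hp hpG
    exact inter_extremePoints_subset_extremePoints_of_subset
      (lsh_mono (Set.subset_union_left)) ⟨mem_lsh hpG, hp⟩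
  have hvertH : ∀ p ∈ VU, p ∈ suppSet H → p ∈ vertexSet H := by
    intro p hp hpH
    exact inter_extremePoints_subset_extremePoints_of_subset
      (lsh_mono (Set.subset_union_right)) ⟨mem_lsh hpH, hp⟩
  have hVU_sub : VU ⊆ vertexSet G ∪ vertexSet H := by
    intro p hp
    rcases hVU_U hp with hpG | hpH
    · exact Or.inl (hvertG p hp hpG)
    · exact Or.inr (hvertH p hp hpH)
  have hVU_supp : VU ⊆ suppSet (G + H) := by
    intro p hp
    intro hzero
    rw [coef_add] at hzero
    have hpG : p ∈ suppSet G := by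
      intro hG0
      rcases hVU_U hp with hpG | hpH
      · exact hpG hG0
      · exact hpH (by rw [hG0] at hzero; linarith)
    have hpH : p ∈ suppSet H := by
      intro hH0
      exact hpG (by rw [hH0] at hzero; linarith)
    have : p ∈ lamV G H ∩ lamV H G :=
      ⟨⟨hvertG p hp hpG, hpH, hzero⟩, ⟨hvertH p hp hpH, hpG, by linarith⟩⟩
    rw [hnv] at this
    exact this
  have hsupp_sub : suppSet (G + H) ⊆ U := by
    intro p hp
    by_contra h
    rw [hUdef, Set.mem_union, not_or] at h
    simp only [suppSet, Set.mem_setOf_eq, not_not] at h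
    exact hp (by rw [coef_add, h.1, h.2, add_zero])
  refine Set.Subset.antisymm ?_ ?_
  · calc lsh (suppSet (G + H)) ⊆ lsh U := lsh_mono hsupp_sub
      _ = lsh VU := hUV
      _ ⊆ lsh (vertexSet G ∪ vertexSet H) := lsh_mono hVU_sub
  · calc lsh (vertexSet G ∪ vertexSet H) ⊆ lsh U :=
          lsh_mono (Set.union_subset_union (vertexSet_subset G) (vertexSet_subset H))
      _ = lsh VU := hUV
      _ ⊆ lsh (suppSet (G + H)) := lsh_mono hVU_supp
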